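/- arXiv:2110.06890 — 8 statements merged into one kernel-verified Lean document; each statement's English description precedes it below -/
import Mathlib

section
/- Traditional equivalence of agents is an equivalence relation (reflexive, symmetric, and transitive). -/
/-- Alternating history x₁y₁...xₙ ending in a percept: the first percept
    together with the list of subsequent (action, percept) pairs. -/
abbrev Hist (P A : Type*) := P × List (A × P)

/-- An agent maps nonempty alternating percept-action histories
    (ending in a percept) to actions. -/
abbrev Agent (P A : Type*) := Hist P A → A

/-- `h` is possible for `π`: for all 1 ≤ i < n, π(x₁y₁...xᵢ) = yᵢ. -/
def Possible {P A : Type*} (π : Agent P A) (h : Hist P A) : Prop :=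
  ∀ i, (hi : i < h.2.length) → π (h.1, h.2.take i) = (h.2.get ⟨i, hi⟩).1

/-- π₁ and π₂ are traditionally equivalent: they agree on every sequence
    possible for π₁. -/
def TradEquiv {P A : Type*} (π₁ π₂ : Agent P A) : Prop :=
  ∀ h : Hist P A, Possible π₁ h → π₁ h = π₂ h

lemma possible_take {P A : Type*} (π : Agent P A) (h : Hist P A)
    (hp : Possible π h) (i : ℕ) : Possible π (h.1, h.2.take i) := by
  intro j hj
  simp only [List.length_take, lt_min_iff] at hj
  have := hp j hj.2
  simpa [List.take_take, Nat.min_eq_left hj.1.le,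
    List.getElem_take] using this

lemma possible_of_tradEquiv {P A : Type*} {π₁ π₂ : Agent P A}
    (he : TradEquiv π₁ π₂) (h : Hist P A) (hp : Possible π₁ h) : Possible π₂ h := by
  intro i hi
  rw [← he (h.1, h.2.take i) (possible_take π₁ h hp i)]
  exact hp i hi

lemma possible_of_tradEquiv' {P A : Type*} {π₁ π₂ : Agent P A}
    (he : TradEquiv π₁ π₂) (h : Hist P A) (hp : Possible π₂ h) : Possible π₁ h := by
  intro i hi
  induction i using Nat.strong_induction_on with
  | _ i IH =>
    have hposs : Possible π₁ (h.1, h.2.take i) := by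
      intro j hj
      simp only [List.length_take, lt_min_iff] at hj
      have := IH j hj.1 (hj.2)
      simpa [List.take_take, Nat.min_eq_left hj.1.le, List.getElem_take] using this
    rw [he (h.1, h.2.take i) hposs]
    exact hp i hi

/-- Traditional equivalence is an equivalence relation. -/
theorem tradEquiv_equivalence {P A : Type*} [Fintype P] [Fintype A] :
    Equivalence (fun π₁ π₂ : Agent P A => TradEquiv π₁ π₂) := by
  constructor
  · intro π h _; rfl
  · intro π₁ π₂ he h hp
    exact (he h (possible_of_tradEquiv' he h hp)).symm
  · intro π₁ π₂ π₃ h12 h23 h hp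
    rw [h12 h hp, h23 h (possible_of_tradEquiv h12 h hp)]
end

section
/- There exist an extended environment μ and two agents π₁, π₂ that are traditionally equivalent but such that the total reward V^{π₁}_μ obtained by π₁ interacting with μ differs from V^{π₂}_μ. Concretely: with observations including a fixed o, rewards in {0,1}, and distinct actions a ≠ b, let μ output initial percept (1,o) if π(⟨(0,o), b, (0,o)⟩) = a and (0,o) otherwise, and output (0,o) at every subsequent step. Let π₁ always output a, and let π₂ output b on input ⟨(0,o), b, (0,o)⟩ and a on all other inputs. Then π₁ and π₂ are traditionally equivalent, yet V^{π₁}_μ = 1 and V^{π₂}_μ = 0. -/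
/-- An extended environment maps an agent together with an even-length
    history x₁y₁...xₙyₙ (encoded as `none` for the empty history, or
    `some (x₁y₁...xₙ, yₙ)`) to the next percept. -/
abbrev ExtEnv (P A : Type*) := Agent P A → Option (Hist P A × A) → P

/-- The history x₁y₁...xₙ₊₁ of the interaction of π with μ after n actions:
    x₁ = μ(π, ⟨⟩), yₙ = π(x₁y₁...xₙ), xₙ₊₁ = μ(π, x₁y₁...xₙyₙ). -/
def ihistExt {P A : Type*} (μ : ExtEnv P A) (π : Agent P A) : ℕ → Hist P A
  | 0 => (μ π none, [])
  | n+1 =>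
    let h := ihistExt μ π n
    (h.1, h.2 ++ [(π h, μ π (some (h, π h)))])

/-- The last percept xₙ₊₁ of a history x₁y₁...xₙ₊₁. -/
def lastPercept {P A : Type*} (h : Hist P A) : P :=
  (h.2.getLast?.map Prod.snd).getD h.1

lemma lastPercept_succ {P A : Type*} (μ : ExtEnv P A) (π : Agent P A) (n : ℕ) :
    lastPercept (ihistExt μ π (n+1)) =
      μ π (some (ihistExt μ π n, π (ihistExt μ π n))) := by
  simp [ihistExt, lastPercept, List.getLast?_concat]

/-- Traditionally equivalent agents can obtain different total rewards in an
    extended environment. -/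
theorem tradEquiv_different_value {O A : Type*}
    [Fintype O] [Fintype A] [DecidableEq O] [DecidableEq A]
    (o : O) (a b : A) (hab : a ≠ b) :
    let μ : ExtEnv (ℚ × O) A := fun π oh =>
      oh.elim (if π (((0 : ℚ), o), [(b, ((0 : ℚ), o))]) = a
               then ((1 : ℚ), o) else ((0 : ℚ), o))
        (fun _ => ((0 : ℚ), o))
    let π₁ : Agent (ℚ × O) A := fun _ => a
    let π₂ : Agent (ℚ × O) A := fun h =>
      if h = (((0 : ℚ), o), [(b, ((0 : ℚ), o))]) then b else a
    TradEquiv π₁ π₂ ∧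
      HasSum (fun n => (lastPercept (ihistExt μ π₁ n)).1) (1 : ℚ) ∧
      HasSum (fun n => (lastPercept (ihistExt μ π₂ n)).1) (0 : ℚ) := by
  intro μ π₁ π₂
  refine ⟨?_, ?_, ?_⟩
  · intro h hp
    show a = _
    simp only [π₂]
    rw [if_neg]
    intro he
    subst he
    have := hp 0 (by simp)
    simp [π₁] at this
    exact hab this
  · have key : (fun n => (lastPercept (ihistExt μ π₁ n)).1) =
        fun n => if n = 0 then (1:ℚ) else 0 := by
      funext n
      cases n with
      | zero => simp [ihistExt, lastPercept, μ, π₁]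
      | succ m => simp [lastPercept_succ, μ]
    rw [key]
    simpa using hasSum_ite_eq (0 : ℕ) (1 : ℚ)
  · have key : (fun n => (lastPercept (ihistExt μ π₂ n)).1) = fun _ => (0:ℚ) := by
      funext n
      cases n with
      | zero =>
        simp [ihistExt, lastPercept, μ, π₂, hab.symm]
      | succ m => simp [lastPercept_succ, μ]
    rw [key]
    exact hasSum_zero
end

section
/- (Alternate characterization of Reality Check) For every agent π, the reality check π_RC of π satisfies: π_RC(x₁y₁...xₙ) = π(x₁y₁...xₙ) if x₁y₁...xₙ is possible for π, and π_RC(x₁y₁...xₙ) = π(⟨x₁⟩) otherwise. That is, replacing 'possible for π_RC' by 'possible for π' in the recursive definition of π_RC yields the same agent. -/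
/-- Auxiliary recursion for the reality check. -/
def RCAux {P A : Type*} [DecidableEq A] (π : Agent P A) (x : P) (l : List (A × P)) : A :=
  if (∀ i, (hi : i < l.length) → RCAux π x (l.take i) = (l.get ⟨i, hi⟩).1)
  then π (x, l) else π (x, [])
termination_by l.length
decreasing_by all_goals (simp [List.length_take]; omega)

/-- The reality check π_RC of π: π_RC(s) = π(s) if s is possible for π_RC,
    else π_RC(s) = π(⟨x₁⟩). -/
def RC {P A : Type*} [DecidableEq A] (π : Agent P A) : Agent P A :=
  fun h => RCAux π h.1 h.2

lemma rc_key {P A : Type*} [DecidableEq A] (π : Agent P A) (x : P) (l : List (A × P)) :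
    (∀ i, (hi : i < l.length) → RCAux π x (l.take i) = (l.get ⟨i, hi⟩).1) ↔
      Possible π (x, l) := by
  constructor
  · intro H i hi
    have hcond : ∀ j, (hj : j < (l.take i).length) →
        RCAux π x ((l.take i).take j) = ((l.take i).get ⟨j, hj⟩).1 := by
      intro j hj
      have hji : j < i := by simp [List.length_take] at hj; omega
      have hjl : j < l.length := by simp [List.length_take] at hj; omega
      have := H j hjl
      simpa [List.take_take, min_eq_left hji.le, List.getElem_take] using this
    have : RCAux π x (l.take i) = π (x, l.take i) := by
      rw [RCAux, if_pos hcond]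
    have hH := H i hi
    rw [this] at hH
    exact hH
  · intro H i
    induction i using Nat.strong_induction_on with
    | _ i IH =>
      intro hi
      have hcond : ∀ j, (hj : j < (l.take i).length) →
          RCAux π x ((l.take i).take j) = ((l.take i).get ⟨j, hj⟩).1 := by
        intro j hj
        have hji : j < i := by simp [List.length_take] at hj; omega
        have hjl : j < l.length := by simp [List.length_take] at hj; omega
        have := IH j hji hjl
        simpa [List.take_take, min_eq_left hji.le, List.getElem_take] using this
      rw [RCAux, if_pos hcond]
      exact H i hi

/-- Alternate characterization: π_RC(s) = π(s) if s is possible for π,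
    and π_RC(s) = π(⟨x₁⟩) otherwise. -/
theorem realityCheck_alternate {P A : Type*} [Fintype P] [Fintype A] [DecidableEq A]
    (π : Agent P A) (h : Hist P A) :
    (Possible π h → RC π h = π h) ∧
      (¬ Possible π h → RC π h = π (h.1, [])) := by
  obtain ⟨x, l⟩ := h
  constructor
  · intro H
    show RCAux π x l = π (x, l)
    rw [RCAux, if_pos ((rc_key π x l).mpr H)]
  · intro H
    show RCAux π x l = π (x, [])
    rw [RCAux, if_neg (fun hc => H ((rc_key π x l).mp hc))]
end

section
/- (Idempotence of Reality Check) For every agent π, the reality check of the reality check of π equals the reality check of π: (π_RC)_RC = π_RC. -/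
/-- Idempotence of Reality Check: (π_RC)_RC = π_RC. -/
theorem realityCheck_idempotent {P A : Type*} [Fintype P] [Fintype A] [DecidableEq A]
    (π : Agent P A) : RC (RC π) = RC π := by
  have key : ∀ n (x : P) (l : List (A × P)), l.length ≤ n →
      RCAux (RC π) x l = RCAux π x l := by
    intro n
    induction n with
    | zero =>
      intro x l hl
      have : l = [] := List.length_eq_zero_iff.mp (Nat.le_zero.mp hl)
      subst this
      rw [RCAux, RCAux]
      simp
      show RCAux π x [] = _
      rw [RCAux]
      simp
    | succ n ih =>
      intro x l hl
      have hcond : (∀ i, (hi : i < l.length) →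
          RCAux (RC π) x (l.take i) = (l.get ⟨i, hi⟩).1) ↔
          (∀ i, (hi : i < l.length) → RCAux π x (l.take i) = (l.get ⟨i, hi⟩).1) := by
        have hlen : ∀ i, i < l.length → (l.take i).length ≤ n := by
          intro i hi
          simp [List.length_take]
          omega
        constructor <;> intro h i hi
        · rw [← ih x (l.take i) (hlen i hi)]; exact h i hi
        · rw [ih x (l.take i) (hlen i hi)]; exact h i hi
      rw [RCAux]
      by_cases hc : ∀ i, (hi : i < l.length) → RCAux π x (l.take i) = (l.get ⟨i, hi⟩).1
      · rw [if_pos (hcond.mpr hc)]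
        show RCAux π x l = _
        rfl
      · rw [if_neg (fun h => hc (hcond.mp h))]
        show RCAux π x [] = _
        rw [RCAux]
        simp
        rw [RCAux, if_neg hc]
  funext h
  exact key h.2.length h.1 h.2 le_rfl
end

section
/- A sequence s is possible for an agent π if and only if s is possible for its reality check π_RC. -/
lemma possible_take_s8 {P A : Type*} (π : Agent P A) (x : P) (l : List (A × P))
    (hp : Possible π (x, l)) (k : ℕ) : Possible π (x, l.take k) := by
  intro j hj
  simp only [List.length_take, lt_min_iff] at hj
  have := hp j hj.2
  simpa [List.take_take, Nat.min_eq_left hj.1.le, List.getElem_take] using this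

lemma rc_eq_of_possible {P A : Type*} [DecidableEq A] (π : Agent P A) (x : P)
    (l : List (A × P)) (hp : Possible (RC π) (x, l)) : RC π (x, l) = π (x, l) := by
  show RCAux π x l = π (x, l)
  rw [RCAux, if_pos]
  exact hp

lemma main_aux {P A : Type*} [DecidableEq A] (π : Agent P A) :
    ∀ n (x : P) (l : List (A × P)), l.length ≤ n →
      (Possible π (x, l) ↔ Possible (RC π) (x, l)) := by
  intro n
  induction n with
  | zero =>
    intro x l hl
    have : l = [] := List.length_eq_zero_iff.mp (Nat.le_zero.mp hl)
    subst this
    constructor <;> (intro _ i hi; simp at hi)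
  | succ n ih =>
    intro x l hl
    constructor
    · intro hp i hi
      have hi' : i < l.length := hi
      have hlen : (l.take i).length ≤ n := by
        simp [List.length_take]; omega
      have hprc : Possible (RC π) (x, l.take i) :=
        (ih x (l.take i) hlen).mp (possible_take_s8 π x l hp i)
      have := rc_eq_of_possible π x (l.take i) hprc
      show RC π (x, l.take i) = _
      rw [this]
      exact hp i hi
    · intro hp i hi
      have hi' : i < l.length := hi
      have hlen : (l.take i).length ≤ n := by
        simp [List.length_take]; omega
      have hprc : Possible (RC π) (x, l.take i) := possible_take_s8 (RC π) x l hp i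
      have := rc_eq_of_possible π x (l.take i) hprc
      have h2 := hp i hi
      show π (x, l.take i) = _
      rw [← this]
      exact h2

/-- A sequence is possible for π iff it is possible for π_RC. -/
theorem possible_iff_possible_realityCheck {P A : Type*}
    [Fintype P] [Fintype A] [DecidableEq A]
    (π : Agent P A) (h : Hist P A) :
    Possible π h ↔ Possible (RC π) h := by
  obtain ⟨x, l⟩ := h
  exact main_aux π l.length x l le_rfl
end

section
/- (Equivalence on genuine history) For every agent π, every extended environment μ, and every odd-length initial segment x₁y₁...xₙ of the result of π_RC interacting with μ, one has π_RC(x₁y₁...xₙ) = π(x₁y₁...xₙ). -/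
lemma ihistExt_fst {P A : Type*} (μ : ExtEnv P A) (σ : Agent P A) (n : ℕ) :
    (ihistExt μ σ n).1 = μ σ none := by
  induction n with
  | zero => rfl
  | succ n ih => simpa [ihistExt] using ih

lemma ihistExt_len {P A : Type*} (μ : ExtEnv P A) (σ : Agent P A) (n : ℕ) :
    (ihistExt μ σ n).2.length = n := by
  induction n with
  | zero => rfl
  | succ n ih => simp [ihistExt, ih]

lemma ihistExt_take {P A : Type*} (μ : ExtEnv P A) (σ : Agent P A) :
    ∀ n k, k ≤ n → (ihistExt μ σ n).2.take k = (ihistExt μ σ k).2 := by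
  intro n
  induction n with
  | zero => intro k hk; interval_cases k; rfl
  | succ n ih =>
    intro k hk
    rcases Nat.lt_or_ge k (n + 1) with h | h
    · have hk' : k ≤ n := Nat.lt_succ_iff.mp h
      have := ih k hk'
      simp only [ihistExt]
      rw [List.take_append_of_le_length (by rw [ihistExt_len]; exact hk')]
      exact this
    · have : k = n + 1 := le_antisymm hk h
      subst this
      rw [List.take_of_length_le (by rw [ihistExt_len])]

lemma ihistExt_get {P A : Type*} (μ : ExtEnv P A) (σ : Agent P A) (n i : ℕ)
    (hi : i < (ihistExt μ σ n).2.length) :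
    ((ihistExt μ σ n).2.get ⟨i, hi⟩).1 = σ (ihistExt μ σ i) := by
  have hin : i < n := by rwa [ihistExt_len] at hi
  have htake : (ihistExt μ σ n).2.take (i + 1) = (ihistExt μ σ (i + 1)).2 :=
    ihistExt_take μ σ n (i + 1) hin
  have hi' : i < (ihistExt μ σ (i + 1)).2.length := by rw [ihistExt_len]; omega
  have hopt : (ihistExt μ σ n).2[i]? = (ihistExt μ σ (i + 1)).2[i]? := by
    rw [← htake]
    simp [List.getElem?_take]
  have hget : (ihistExt μ σ n).2.get ⟨i, hi⟩
      = (ihistExt μ σ (i + 1)).2.get ⟨i, hi'⟩ := by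
    have := hopt
    rw [List.getElem?_eq_getElem hi, List.getElem?_eq_getElem hi'] at this
    simpa using this
  rw [hget]
  simp only [ihistExt]
  rw [List.get_eq_getElem, List.getElem_append_right (by rw [ihistExt_len])]
  simp [ihistExt_len]

/-- Equivalence on genuine history: on every odd-length initial segment of
    the result of π_RC interacting with an extended environment μ,
    π_RC agrees with π. -/
theorem realityCheck_genuine_history {P A : Type*}
    [Fintype P] [Fintype A] [DecidableEq A]
    (π : Agent P A) (μ : ExtEnv P A) (n : ℕ) :
    RC π (ihistExt μ (RC π) n) = π (ihistExt μ (RC π) n) := by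
  show RCAux π (ihistExt μ (RC π) n).1 (ihistExt μ (RC π) n).2 = _
  rw [RCAux]
  rw [if_pos]
  intro i hi
  rw [ihistExt_take μ (RC π) n i (by have := ihistExt_len μ (RC π) n; omega),
    ihistExt_get]
  have h1 : (ihistExt μ (RC π) n).1 = (ihistExt μ (RC π) i).1 := by
    rw [ihistExt_fst, ihistExt_fst]
  rw [h1]
  rfl
end

section
/- Let y be a fixed action and define the 'reality check defaulting to y' of an agent π, π_RC(y), recursively by: π_RC(y)(s) = π(s) if s is possible for π_RC(y), and π_RC(y)(s) = y otherwise. Then π_RC(y)(s) = π(s) whenever s is possible for π; in particular π is traditionally equivalent to π_RC(y). -/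
/-- Auxiliary recursion for the reality check defaulting to y. -/
def RCdAux {P A : Type*} [DecidableEq A] (π : Agent P A) (y : A)
    (x : P) (l : List (A × P)) : A :=
  if (∀ i, (hi : i < l.length) → RCdAux π y x (l.take i) = (l.get ⟨i, hi⟩).1)
  then π (x, l) else y
termination_by l.length
decreasing_by all_goals (simp [List.length_take]; omega)

/-- The reality check of π defaulting to y: π_RC(y)(s) = π(s) if s is
    possible for π_RC(y), else π_RC(y)(s) = y. -/
def RCd {P A : Type*} [DecidableEq A] (π : Agent P A) (y : A) : Agent P A :=
  fun h => RCdAux π y h.1 h.2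

/-- π_RC(y) agrees with π on every sequence possible for π; in particular
    π is traditionally equivalent to π_RC(y). -/
theorem realityCheckDefault_tradEquiv {P A : Type*}
    [Fintype P] [Fintype A] [DecidableEq A] (π : Agent P A) (y : A) :
    (∀ h : Hist P A, Possible π h → RCd π y h = π h) ∧
      TradEquiv π (RCd π y) := by
  have key : ∀ n (l : List (A × P)) (x : P), l.length ≤ n →
      Possible π (x, l) → RCdAux π y x l = π (x, l) := by
    intro n
    induction n with
    | zero =>
      intro l x hl hp
      rw [RCdAux]
      simp at hl
      simp [hl]
    | succ n ih =>
      intro l x hl hp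
      rw [RCdAux]
      have : ∀ i, (hi : i < l.length) → RCdAux π y x (l.take i) = (l.get ⟨i, hi⟩).1 := by
        intro i hi
        have hpt : Possible π (x, l.take i) := by
          intro j hj
          simp only [List.length_take, lt_min_iff] at hj
          have := hp j hj.2
          simpa [List.take_take, min_eq_left (le_of_lt hj.1), List.get_eq_getElem,
            List.getElem_take] using this
        have hlen : (l.take i).length ≤ n := by
          simp [List.length_take]; omega
        rw [ih _ _ hlen hpt]
        have := hp i hi
        simpa using this
      rw [if_pos this]
  constructor
  · intro h hp
    exact key h.2.length h.2 h.1 le_rfl hp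
  · intro h hp
    exact (key h.2.length h.2 h.1 le_rfl hp).symm
end

section
/- The reality check defaulting to y is idempotent: (π_RC(y))_RC(y) = π_RC(y) for every agent π. -/
/-- The reality check defaulting to y is idempotent. -/
theorem realityCheckDefault_idempotent {P A : Type*}
    [Fintype P] [Fintype A] [DecidableEq A] (π : Agent P A) (y : A) :
    RCd (RCd π y) y = RCd π y := by
  have main : ∀ n (x : P) (l : List (A × P)), l.length ≤ n →
      RCdAux (RCd π y) y x l = RCdAux π y x l := by
    intro n
    induction n with
    | zero =>
      intro x l hl
      have hl0 : l = [] := List.length_eq_zero_iff.mp (Nat.le_zero.mp hl)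
      subst hl0
      have hv : ∀ {f : Agent P A}, ∀ i, (hi : i < ([] : List (A × P)).length) →
          RCdAux f y x ([].take i) = ([].get ⟨i, hi⟩).1 := fun i hi => absurd hi (by simp)
      rw [RCdAux, RCdAux, if_pos hv, if_pos hv]
      show RCdAux π y x [] = π (x, [])
      rw [RCdAux, if_pos hv]
    | succ n IH =>
      intro x l hl
      have hcond : (∀ i, (hi : i < l.length) →
            RCdAux (RCd π y) y x (l.take i) = (l.get ⟨i, hi⟩).1) ↔
          (∀ i, (hi : i < l.length) →
            RCdAux π y x (l.take i) = (l.get ⟨i, hi⟩).1) := by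
        have htk : ∀ i, i < l.length → (l.take i).length ≤ n := by
          intro i hi
          simp only [List.length_take]
          omega
        constructor <;> intro h i hi
        · rw [← IH x (l.take i) (htk i hi)]; exact h i hi
        · rw [IH x (l.take i) (htk i hi)]; exact h i hi
      rw [RCdAux, RCdAux]
      by_cases hc : ∀ i, (hi : i < l.length) →
          RCdAux π y x (l.take i) = (l.get ⟨i, hi⟩).1
      · rw [if_pos (hcond.mpr hc), if_pos hc]
        show RCdAux π y x l = π (x, l)
        rw [RCdAux, if_pos hc]
      · rw [if_neg (fun h => hc (hcond.mp h)), if_neg hc]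
  funext h
  exact main h.2.length h.1 h.2 le_rfl
end
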